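/- Let X be a real random variable whose law has an even density G' with cumulative distribution function G, and let Y be a random vector in ℝ^k independent of X, whose law has a density f satisfying f(−y) = f(y) for almost every y (e.g. an elliptical density centred at 0). Let W : ℝ^k → ℝ be measurable with W(−y) = −W(y), and define Z = Y if X < W(Y) and Z = −Y if X > W(Y). Then the law of Z has density z ↦ 2 f(z) G(W(z)) with respect to Lebesgue measure on ℝ^k. -/

import Mathlib

open MeasureTheory Matrix ProbabilityTheory Real
open scoped ENNReal NNReal

/-- Standard normal cumulative distribution function
`Φ(x) = ∫_{-∞}^x (2π)^{-1/2} exp(-u²/2) du`. -/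
noncomputable def stdNormCDF (x : ℝ) : ℝ :=
  ∫ u in Set.Iic x, (2 * Real.pi) ^ (-(1:ℝ)/2) * Real.exp (-(u ^ 2) / 2)

/-- Density `φ(z; Ω) = (2π)^{-k/2} (det Ω)^{-1/2} exp(-½ zᵀ Ω⁻¹ z)` of the centred
multivariate normal distribution with covariance matrix `Ω`. -/
noncomputable def mvNormalPDF {ι : Type*} [Fintype ι] [DecidableEq ι]
    (Ω : Matrix ι ι ℝ) (z : ι → ℝ) : ℝ :=
  (2 * Real.pi) ^ (-(Fintype.card ι : ℝ) / 2) * Ω.det ^ (-(1:ℝ)/2) *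
    Real.exp (-(z ⬝ᵥ Ω⁻¹.mulVec z) / 2)

/-- Density `f(z) = 2 φ(z; Ω) Φ(αᵀ z)` of the multivariate skew-normal
distribution `SN(Ω, α)`. -/
noncomputable def snPDF {ι : Type*} [Fintype ι] [DecidableEq ι]
    (Ω : Matrix ι ι ℝ) (α : ι → ℝ) (z : ι → ℝ) : ℝ :=
  2 * mvNormalPDF Ω z * stdNormCDF (α ⬝ᵥ z)

/-- A correlation matrix: symmetric positive definite with unit diagonal. -/
def IsCorrelationMatrix {ι : Type*} [Fintype ι] (Ω : Matrix ι ι ℝ) : Prop :=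
  Ω.PosDef ∧ ∀ i, Ω i i = 1

/-- The law of the multivariate skew-normal distribution `SN(Ω, α)`:
the measure on `ι → ℝ` with density `snPDF Ω α` w.r.t. Lebesgue measure. -/
noncomputable def snMeasure {ι : Type*} [Fintype ι] [DecidableEq ι]
    (Ω : Matrix ι ι ℝ) (α : ι → ℝ) : Measure (ι → ℝ) :=
  volume.withDensity fun z => ENNReal.ofReal (snPDF Ω α z)

/-- Chi-square density with `p` degrees of freedom. -/
noncomputable def chiSqPDF (p : ℕ) (x : ℝ) : ℝ :=
  if 0 < x then x ^ ((p:ℝ)/2 - 1) * Real.exp (-x/2) / (2 ^ ((p:ℝ)/2) * Real.Gamma ((p:ℝ)/2))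
  else 0

/-- Chi-square law with `p` degrees of freedom. -/
noncomputable def chiSqMeasure (p : ℕ) : Measure ℝ :=
  volume.withDensity fun x => ENNReal.ofReal (chiSqPDF p x)

section AuxSkewed
variable {α : Type*} [MeasurableSpace α]

lemma lintegral_withDensity_simpleFunc' (μ : Measure α) (F : α → ℝ≥0∞) (φ : SimpleFunc α ℝ≥0∞) :
    ∫⁻ a, F a ∂(μ.withDensity φ) = ∫⁻ a, φ a ∂(μ.withDensity F) := by
  induction φ using SimpleFunc.induction with
  | @const c s hs =>
      simp only [SimpleFunc.coe_const, SimpleFunc.coe_piecewise, SimpleFunc.coe_zero,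
        Set.piecewise_eq_indicator, Function.const]
      calc ∫⁻ a, F a ∂(μ.withDensity (s.indicator fun _ => c))
          = ∫⁻ a, F a ∂(c • μ.restrict s) := by
            rw [withDensity_indicator hs, withDensity_const]
        _ = c * ∫⁻ a, F a ∂(μ.restrict s) := lintegral_smul_measure _ _
        _ = c * (μ.withDensity F) s := by rw [withDensity_apply _ hs]
        _ = ∫⁻ a, s.indicator (fun _ => c) a ∂(μ.withDensity F) :=
            (lintegral_indicator_const hs c).symm
  | @add φ ψ hdisj hφ hψ =>
      simp only [SimpleFunc.coe_add]
      rw [withDensity_add_left φ.measurable, lintegral_add_measure]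
      rw [show (⇑φ + ⇑ψ : α → ℝ≥0∞) = fun a => φ a + ψ a from rfl]
      rw [lintegral_add_left φ.measurable, hφ, hψ]

lemma lintegral_withDensity_symm' (μ : Measure α) (F : α → ℝ≥0∞) {c : α → ℝ≥0∞}
    (hc : Measurable c) :
    ∫⁻ a, F a ∂(μ.withDensity c) = ∫⁻ a, c a ∂(μ.withDensity F) := by
  set d : ℕ → SimpleFunc α ℝ≥0∞ := fun n => (SimpleFunc.eapproxDiff c n).map ((↑) : ℝ≥0 → ℝ≥0∞)
    with hd
  have hdecomp : c = ∑' n, ⇑(d n) := by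
    funext a
    rw [ENNReal.tsum_apply]
    simp only [hd, SimpleFunc.coe_map, Function.comp_apply]
    exact (SimpleFunc.tsum_eapproxDiff c hc a).symm
  rw [hdecomp, withDensity_tsum fun n => (d n).measurable, lintegral_sum_measure]
  simp only [ENNReal.tsum_apply]
  rw [lintegral_tsum fun n => (d n).measurable.aemeasurable]
  exact tsum_congr fun n => lintegral_withDensity_simpleFunc' μ F _

lemma withDensity_mul_left' (μ : Measure α) (F : α → ℝ≥0∞) {c : α → ℝ≥0∞}
    (hc : Measurable c) (hcfin : ∀ x, c x < ∞) :
    μ.withDensity (fun x => c x * F x) = (μ.withDensity F).withDensity c := by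
  ext A hA
  rw [withDensity_apply _ hA, withDensity_apply _ hA]
  calc ∫⁻ a in A, c a * F a ∂μ
      = ∫⁻ a, F a ∂((μ.restrict A).withDensity c) := by
        rw [lintegral_withDensity_eq_lintegral_mul_non_measurable _ hc
          (Filter.Eventually.of_forall hcfin) F]
        rfl
    _ = ∫⁻ a, c a ∂((μ.restrict A).withDensity F) := lintegral_withDensity_symm' _ F hc
    _ = ∫⁻ a in A, c a ∂(μ.withDensity F) := by rw [← restrict_withDensity hA]

lemma map_neg_withDensity_even' {E : Type*} [MeasurableSpace E] [AddGroup E] [MeasurableNeg E]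
    (μ : Measure E) [μ.IsNegInvariant] (D : E → ℝ≥0∞) (hD : ∀ᵐ x ∂μ, D (-x) = D x) :
    Measure.map (fun x : E => -x) (μ.withDensity D) = μ.withDensity D := by
  ext A hA
  have hA' : MeasurableSet ((fun x : E => -x) ⁻¹' A) := measurable_neg hA
  rw [Measure.map_apply measurable_neg hA, withDensity_apply _ hA', withDensity_apply _ hA,
    ← lintegral_indicator hA', ← lintegral_indicator hA]
  calc ∫⁻ x, ((fun x : E => -x) ⁻¹' A).indicator D x ∂μ
      = ∫⁻ x, ((fun x : E => -x) ⁻¹' A).indicator D (-x) ∂μ := by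
        conv_lhs => rw [← Measure.map_neg_eq_self μ]
        exact lintegral_map_equiv _ (MeasurableEquiv.neg E)
    _ = ∫⁻ x, A.indicator (fun x => D (-x)) x ∂μ := by
        congr 1
        funext x
        by_cases hx : x ∈ A <;> simp [Set.indicator, hx]
    _ = ∫⁻ x, A.indicator D x ∂μ := by
        refine lintegral_congr_ae (hD.mono fun x hx => ?_)
        by_cases hxA : x ∈ A <;> simp [Set.indicator, hxA, hx]

end AuxSkewed

/-- random number generation for skewed densities.  If `X` has an
even density `G'` with cdf `G`, `Y` (independent of `X`) has an even density
`f`, `W` is odd, and `Z = Y` when `X < W(Y)`, `Z = −Y` otherwise, then `Z` has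
density `z ↦ 2 f(z) G(W(z))`. -/
theorem skewed_density_generation {k : ℕ}
    {S : Type*} [MeasureSpace S] [IsProbabilityMeasure (ℙ : Measure S)]
    (X : S → ℝ) (hXmeas : Measurable X) (G' : ℝ → ℝ)
    (hXlaw : Measure.map X ℙ = volume.withDensity fun x => ENNReal.ofReal (G' x))
    (hG'even : ∀ᵐ x : ℝ, G' (-x) = G' x)
    (G : ℝ → ℝ) (hG : ∀ x, G x = (ℙ {ω | X ω ≤ x}).toReal)
    (Y : S → Fin k → ℝ) (hYmeas : Measurable Y)
    (hindep : IndepFun X Y ℙ)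
    (f : (Fin k → ℝ) → ℝ) (hf0 : ∀ y, 0 ≤ f y)
    (hYlaw : Measure.map Y ℙ = volume.withDensity fun y => ENNReal.ofReal (f y))
    (hfeven : ∀ᵐ y : Fin k → ℝ, f (-y) = f y)
    (W : (Fin k → ℝ) → ℝ) (hWmeas : Measurable W) (hWodd : ∀ y, W (-y) = -W y)
    (Z : S → Fin k → ℝ)
    (hZ : ∀ ω, Z ω = if X ω < W (Y ω) then Y ω else -Y ω) :
    Measure.map Z ℙ =
      volume.withDensity fun z => ENNReal.ofReal (2 * f z * G (W z)) := by
  haveI hpX : IsProbabilityMeasure (Measure.map X ℙ) :=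
    Measure.isProbabilityMeasure_map hXmeas.aemeasurable
  haveI hpY : IsProbabilityMeasure (Measure.map Y ℙ) :=
    Measure.isProbabilityMeasure_map hYmeas.aemeasurable
  set gE : ℝ → ℝ≥0∞ := fun t => Measure.map X ℙ (Set.Iic t) with hgE
  have hgE_mono : Monotone gE := fun a b hab => measure_mono (Set.Iic_subset_Iic.mpr hab)
  have hgE_meas : Measurable gE := hgE_mono.measurable
  have hGofReal : ∀ t, ENNReal.ofReal (G t) = gE t := by
    intro t
    rw [hG t, show {ω | X ω ≤ t} = X ⁻¹' Set.Iic t from rfl,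
      ← Measure.map_apply hXmeas measurableSet_Iic,
      ENNReal.ofReal_toReal (measure_ne_top _ _)]
  have hGnonneg : ∀ t, 0 ≤ G t := fun t => by rw [hG t]; exact ENNReal.toReal_nonneg
  have hatom : ∀ t : ℝ, Measure.map X ℙ {t} = 0 := by
    intro t
    have h0 : (volume : Measure ℝ).restrict {t} = 0 :=
      Measure.restrict_eq_zero.mpr (by simp)
    rw [hXlaw, withDensity_apply _ (measurableSet_singleton t), h0, lintegral_zero_measure]
  have hIio : ∀ t, Measure.map X ℙ (Set.Iio t) = gE t := by
    intro t
    refine le_antisymm (measure_mono Set.Iio_subset_Iic_self) ?_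
    calc gE t ≤ Measure.map X ℙ (Set.Iio t ∪ {t}) := measure_mono (by
          intro x hx
          have hx' : x ≤ t := hx
          rcases lt_or_eq_of_le hx' with h | h
          · exact Or.inl h
          · exact Or.inr h)
      _ ≤ Measure.map X ℙ (Set.Iio t) + Measure.map X ℙ {t} := measure_union_le _ _
      _ = Measure.map X ℙ (Set.Iio t) := by rw [hatom t, add_zero]
  have hXneg : Measure.map (fun x : ℝ => -x) (Measure.map X ℙ) = Measure.map X ℙ := by
    rw [hXlaw]
    exact map_neg_withDensity_even' volume _ (hG'even.mono fun x hx => by rw [hx])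
  have hIci : ∀ t, Measure.map X ℙ (Set.Ici t) = gE (-t) := by
    intro t
    have h1 : gE (-t) = Measure.map X ℙ ((fun x : ℝ => -x) ⁻¹' Set.Iic (-t)) := by
      rw [← Measure.map_apply measurable_neg measurableSet_Iic, hXneg]
    rw [h1]
    congr 1
    ext x
    simp [neg_le_neg_iff]
  have hsplit : ∀ t, gE t + gE (-t) = 1 := by
    intro t
    rw [← hIio t, ← hIci t]
    have h2 := measure_add_measure_compl (μ := Measure.map X ℙ) (measurableSet_Iio (a := t))
    rwa [Set.compl_Iio, measure_univ] at h2
  have hYneg : Measure.map (fun y : Fin k → ℝ => -y) (Measure.map Y ℙ) = Measure.map Y ℙ := by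
    rw [hYlaw]
    exact map_neg_withDensity_even' volume _ (hfeven.mono fun y hy => by rw [hy])
  set g : ℝ × (Fin k → ℝ) → (Fin k → ℝ) := fun p => if p.1 < W p.2 then p.2 else -p.2 with hgdef
  have hgmeas : Measurable g :=
    Measurable.ite (measurableSet_lt measurable_fst (hWmeas.comp measurable_snd))
      measurable_snd measurable_snd.neg
  have hpairmeas : Measurable fun ω => (X ω, Y ω) := hXmeas.prodMk hYmeas
  have hZeq : Z = g ∘ fun ω => (X ω, Y ω) := funext fun ω => hZ ω
  have hprodlaw : Measure.map (fun ω => (X ω, Y ω)) ℙ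
      = (Measure.map X ℙ).prod (Measure.map Y ℙ) :=
    (indepFun_iff_map_prod_eq_prod_map_map hXmeas.aemeasurable hYmeas.aemeasurable).mp hindep
  have hmapZ : Measure.map Z ℙ = Measure.map g ((Measure.map X ℙ).prod (Measure.map Y ℙ)) := by
    rw [hZeq, ← Measure.map_map hgmeas hpairmeas, hprodlaw]
  -- slice computation
  have hslice : ∀ (A : Set (Fin k → ℝ)), MeasurableSet A → ∀ y : Fin k → ℝ,
      Measure.map X ℙ {x : ℝ | g (x, y) ∈ A} =
        A.indicator (fun _ => (1 : ℝ≥0∞)) y * gE (W y)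
          + A.indicator (fun _ => (1 : ℝ≥0∞)) (-y) * gE (-W y) := by
    intro A hA y
    by_cases hy : y ∈ A <;> by_cases hy' : -y ∈ A
    · have hset : {x : ℝ | g (x, y) ∈ A} = Set.univ := by
        ext x
        simp only [hgdef, Set.mem_setOf_eq, Set.mem_univ, iff_true]
        split_ifs <;> assumption
      rw [hset, measure_univ, Set.indicator_of_mem hy, Set.indicator_of_mem hy',
        one_mul, one_mul]
      exact (hsplit (W y)).symm
    · have hset : {x : ℝ | g (x, y) ∈ A} = Set.Iio (W y) := by
        ext x
        simp only [hgdef, Set.mem_setOf_eq, Set.mem_Iio]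
        split_ifs with h
        · simp [h, hy]
        · simp [h, hy']
      rw [hset, hIio]
      simp [Set.indicator_of_mem hy, Set.indicator_of_notMem hy']
    · have hset : {x : ℝ | g (x, y) ∈ A} = Set.Ici (W y) := by
        ext x
        simp only [hgdef, Set.mem_setOf_eq, Set.mem_Ici]
        split_ifs with h
        · simp [hy, not_le.mpr h]
        · simp [hy', not_lt.mp h]
      rw [hset, hIci]
      simp [Set.indicator_of_notMem hy, Set.indicator_of_mem hy']
    · have hset : {x : ℝ | g (x, y) ∈ A} = (∅ : Set ℝ) := by
        ext x
        simp only [hgdef, Set.mem_setOf_eq, Set.mem_empty_iff_false, iff_false]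
        split_ifs <;> assumption
      rw [hset, measure_empty]
      simp [Set.indicator_of_notMem hy, Set.indicator_of_notMem hy']
  -- key computation
  have key : ∀ A : Set (Fin k → ℝ), MeasurableSet A →
      Measure.map Z ℙ A = ∫⁻ y in A, 2 * gE (W y) ∂(Measure.map Y ℙ) := by
    intro A hA
    have hgA : MeasurableSet (g ⁻¹' A) := hgmeas hA
    rw [hmapZ, Measure.map_apply hgmeas hA,
      ← Measure.prod_swap (μ := Measure.map Y ℙ) (ν := Measure.map X ℙ),
      Measure.map_apply measurable_swap hgA,
      Measure.prod_apply (measurable_swap hgA)]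
    have hptwise : ∀ y : Fin k → ℝ,
        Measure.map X ℙ (Prod.mk y ⁻¹' (Prod.swap ⁻¹' (g ⁻¹' A)))
          = A.indicator (fun _ => (1 : ℝ≥0∞)) y * gE (W y)
            + A.indicator (fun _ => (1 : ℝ≥0∞)) (-y) * gE (-W y) :=
      fun y => hslice A hA y
    rw [lintegral_congr hptwise]
    have hm1 : Measurable fun y : Fin k → ℝ =>
        A.indicator (fun _ => (1 : ℝ≥0∞)) y * gE (W y) :=
      (measurable_const.indicator hA).mul (hgE_meas.comp hWmeas)
    rw [lintegral_add_left hm1]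
    have h2 : ∫⁻ y, A.indicator (fun _ => (1 : ℝ≥0∞)) (-y) * gE (-W y) ∂(Measure.map Y ℙ)
        = ∫⁻ y, A.indicator (fun _ => (1 : ℝ≥0∞)) y * gE (W y) ∂(Measure.map Y ℙ) := by
      conv_lhs => rw [← hYneg,
        show (fun y : Fin k → ℝ => -y) = ⇑(MeasurableEquiv.neg (Fin k → ℝ)) from rfl,
        lintegral_map_equiv]
      refine lintegral_congr fun y => ?_
      have he : (MeasurableEquiv.neg (Fin k → ℝ)) y = -y := rfl
      rw [he, neg_neg, hWodd, neg_neg]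
    rw [h2, ← two_mul]
    rw [← lintegral_const_mul 2 hm1]
    rw [show (fun y : Fin k → ℝ => 2 * (A.indicator (fun _ => (1 : ℝ≥0∞)) y * gE (W y)))
        = fun y => A.indicator (fun y => 2 * gE (W y)) y from funext fun y => by
          by_cases hy : y ∈ A <;>
            simp [Set.indicator_of_mem, Set.indicator_of_notMem, hy]]
    rw [lintegral_indicator hA]
  -- rewrite the RHS
  have hcmeas : Measurable fun z : Fin k → ℝ => 2 * gE (W z) :=
    (hgE_meas.comp hWmeas).const_mul 2
  have hcfin : ∀ z : Fin k → ℝ, 2 * gE (W z) < ∞ :=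
    fun z => ENNReal.mul_lt_top (by simp) (measure_lt_top _ _)
  have hRHS : (volume.withDensity fun z => ENNReal.ofReal (2 * f z * G (W z)))
      = (Measure.map Y ℙ).withDensity (fun z => 2 * gE (W z)) := by
    have hfun : (fun z => ENNReal.ofReal (2 * f z * G (W z)))
        = fun z => (2 * gE (W z)) * ENNReal.ofReal (f z) := by
      funext z
      rw [show 2 * f z * G (W z) = 2 * G (W z) * f z by ring,
        ENNReal.ofReal_mul (mul_nonneg (by norm_num) (hGnonneg _)), ENNReal.ofReal_mul (by norm_num : (0:ℝ) ≤ 2),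
        hGofReal]
      norm_num
    rw [hfun, withDensity_mul_left' volume _ hcmeas hcfin, ← hYlaw]
  ext A hA
  rw [key A hA, hRHS, withDensity_apply _ hA]
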